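/- For each root \gamma = e_i - e_j of sl(n) (i \ne j) with |i - j| = d, the number of ways to factor the elementary tensor E_z = e_{z_1} \otimes e_{z_2} associated to a T-pair z of size d and order k as a product E_x E_y with x, y T-pairs of the same sign as z and Ord(x) = Ord(y) = k is exactly d - 1, provided z reverses orientation; and each such factorization has both x and y reversing orientation with C_x = C_y = 1. -/

import Mathlib

/-- Adjacency of simple roots `α_i`, `α_j` of `sl(n)` (equivalent to
`(α_i, α_j) = -1`): the indices differ by one. -/
def Adj (i j : ℕ) : Prop := i + 1 = j ∨ j + 1 = i

/-- One application of the additive extension of `T` to positive roots.  A positive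
root `e_i - e_j` (`i < j`) is encoded as the pair `(i, j)`; its simple-root support is
`Finset.Ico i j`.  `TStep T Γ1 α β` says that all simple constituents of `α` lie in
`Γ1` and that `T` maps the support of `α` onto the support of `β` (possibly reversing
orientation), i.e. `T α = β`. -/
def TStep (T : ℕ → ℕ) (Γ1 : Finset ℕ) (α β : ℕ × ℕ) : Prop :=
  α.1 < α.2 ∧ β.1 < β.2 ∧ Finset.Ico α.1 α.2 ⊆ Γ1 ∧
    Finset.image T (Finset.Ico α.1 α.2) = Finset.Ico β.1 β.2

/-- `TIter T Γ1 k α β` says `T^k α = β` for positive roots `α`, `β`. -/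
def TIter (T : ℕ → ℕ) (Γ1 : Finset ℕ) : ℕ → ℕ × ℕ → ℕ × ℕ → Prop
  | 0, α, β => α = β
  | k + 1, α, β => ∃ γ, TStep T Γ1 α γ ∧ TIter T Γ1 k γ β

/-- A Belavin–Drinfeld triple of type `A_{n-1}`: `Γ1, Γ2` are subsets of the simple
roots `{1, …, n-1}` of `sl(n)`, `T` restricts to a bijection `Γ1 → Γ2` preserving the
inner product (equivalently, preserving adjacency), and `T` is nilpotent. -/
def BDTriple (n : ℕ) (Γ1 Γ2 : Finset ℕ) (T : ℕ → ℕ) : Prop :=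
  Γ1 ⊆ Finset.Ico 1 n ∧ Γ2 ⊆ Finset.Ico 1 n ∧
    Set.BijOn T ↑Γ1 ↑Γ2 ∧
    (∀ i ∈ Γ1, ∀ j ∈ Γ1, (Adj (T i) (T j) ↔ Adj i j)) ∧
    (∀ i ∈ Γ1, ∃ k, 1 ≤ k ∧ T^[k] i ∉ Γ1)

open Matrix Kronecker

/-- A `T`-pair for a Belavin–Drinfeld triple: the data of a positive root `α` (with
`1 ≤ α.1 < α.2 ≤ n`) and `β = T^k α`.  If `pos = true` this encodes the positive
`T`-pair `(T^k α, -α)` (requiring `k > 0`); if `pos = false` it encodes the negative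
`T`-pair `(-α, T^k α)` (allowing `k = 0`).  `Ord = k` and the size is `|α| = α.2 - α.1`. -/
structure TPair (n : ℕ) (T : ℕ → ℕ) (Γ1 : Finset ℕ) where
  pos : Bool
  k : ℕ
  α : ℕ × ℕ
  β : ℕ × ℕ
  hα : α.1 < α.2
  hlo : 1 ≤ α.1 ∧ 1 ≤ β.1
  hhi : α.2 ≤ n ∧ β.2 ≤ n
  hiter : TIter T Γ1 k α β
  hpos : pos = true → 0 < k

open Fin.NatCast in
/-- The elementary matrix `e_{e_i - e_j} = e_{ij}` attached to a root `e_i - e_j`,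
encoded as the pair `(i, j)` with `1 ≤ i, j ≤ n` (indices taken in `Fin (n+1)`). -/
noncomputable def Eroot (n : ℕ) (p : ℕ × ℕ) : Matrix (Fin (n + 1)) (Fin (n + 1)) ℂ :=
  single (p.1 : Fin (n + 1)) (p.2 : Fin (n + 1)) 1

/-- The elementary tensor `E_x` attached to a `T`-pair `x`: for a positive pair
`(β, -α)` it is `e_β ⊗ e_{-α}`, and for a negative pair `(-α, β)` it is
`e_{-α} ⊗ e_β`, where `e_{-(e_i - e_j)} = e_{ji}`. -/
noncomputable def Epair {n : ℕ} {T : ℕ → ℕ} {Γ1 : Finset ℕ} (x : TPair n T Γ1) :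
    Matrix (Fin (n + 1) × Fin (n + 1)) (Fin (n + 1) × Fin (n + 1)) ℂ :=
  if x.pos then Eroot n x.β ⊗ₖ Eroot n (x.α.2, x.α.1)
  else Eroot n (x.α.2, x.α.1) ⊗ₖ Eroot n x.β

/-- The `T`-pair `x` reverses orientation: `T^k` maps the leftmost simple root of
`α` to the rightmost simple root of `β = T^k α`. -/
def ROrient {n : ℕ} {T : ℕ → ℕ} {Γ1 : Finset ℕ} (x : TPair n T Γ1) : Prop :=
  TIter T Γ1 x.k (x.α.1, x.α.1 + 1) (x.β.2 - 1, x.β.2)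

section Lemmas

variable {n : ℕ} {Γ1 Γ2 : Finset ℕ} {T : ℕ → ℕ}

lemma TStep_func {α β β' : ℕ × ℕ} (h1 : TStep T Γ1 α β) (h2 : TStep T Γ1 α β') : β = β' := by
  obtain ⟨-, hb, -, hi⟩ := h1
  obtain ⟨-, hb', -, hi'⟩ := h2
  have e : Finset.Ico β.1 β.2 = Finset.Ico β'.1 β'.2 := by rw [← hi, ← hi']
  have m1 : β.1 ∈ Finset.Ico β'.1 β'.2 := by rw [← e]; simp [Finset.mem_Ico]; omega
  have m2 : β'.1 ∈ Finset.Ico β.1 β.2 := by rw [e]; simp [Finset.mem_Ico]; omega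
  have m3 : β.2 - 1 ∈ Finset.Ico β'.1 β'.2 := by rw [← e]; simp [Finset.mem_Ico]; omega
  have m4 : β'.2 - 1 ∈ Finset.Ico β.1 β.2 := by rw [e]; simp [Finset.mem_Ico]; omega
  simp [Finset.mem_Ico] at m1 m2 m3 m4
  have : β.1 = β'.1 ∧ β.2 = β'.2 := by omega
  exact Prod.ext this.1 this.2

lemma TIter_func : ∀ {k : ℕ} {α β β' : ℕ × ℕ}, TIter T Γ1 k α β → TIter T Γ1 k α β' → β = β'
  | 0, _, _, _, h1, h2 => h1 ▸ h2 ▸ rfl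
  | (k+1), α, β, β', ⟨γ, hs, hi⟩, ⟨γ', hs', hi'⟩ => by
      obtain rfl : γ = γ' := TStep_func hs hs'
      exact TIter_func hi hi'

lemma TIter_lt : ∀ {k : ℕ} {α β : ℕ × ℕ}, TIter T Γ1 k α β → α.1 < α.2 → β.1 < β.2
  | 0, _, _, h, ha => h ▸ ha
  | (k+1), α, β, ⟨γ, hs, hi⟩, _ => TIter_lt hi hs.2.1

end Lemmas
section Lemmas2

variable {n : ℕ} {Γ1 Γ2 : Finset ℕ} {T : ℕ → ℕ}

lemma step_affine (h : BDTriple n Γ1 Γ2 T) {α β : ℕ × ℕ} (hs : TStep T Γ1 α β) :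
    β.2 - β.1 = α.2 - α.1 ∧
      ((∀ t, t < α.2 - α.1 → T (α.1 + t) = β.1 + t) ∨
       (∀ t, t < α.2 - α.1 → T (α.1 + t) + t + 1 = β.2)) := by
  obtain ⟨hA, hB, hsub, himg⟩ := hs
  obtain ⟨-, hΓ2, hbij, hadj, -⟩ := h
  have hinj : Set.InjOn T ↑Γ1 := hbij.injOn
  set d := α.2 - α.1 with hdd
  set f : ℕ → ℕ := fun t => T (α.1 + t) with hf
  have hcard : β.2 - β.1 = d := by
    have h1 : (Finset.image T (Finset.Ico α.1 α.2)).card = (Finset.Ico α.1 α.2).card :=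
      Finset.card_image_of_injOn (hinj.mono (by exact_mod_cast hsub))
    rw [himg] at h1
    simpa using h1
  have hmem : ∀ t, t < d → β.1 ≤ f t ∧ f t < β.2 := by
    intro t ht
    have : f t ∈ Finset.Ico β.1 β.2 :=
      himg ▸ Finset.mem_image_of_mem T (by simp [Finset.mem_Ico]; omega)
    simpa [Finset.mem_Ico] using this
  have hinj' : ∀ s t, s < d → t < d → f s = f t → s = t := by
    intro s t hs' ht' he
    have := hinj (by exact_mod_cast hsub (by simp [Finset.mem_Ico]; omega) : (α.1 + s : ℕ) ∈ (↑Γ1 : Set ℕ))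
      (by exact_mod_cast hsub (by simp [Finset.mem_Ico]; omega) : (α.1 + t : ℕ) ∈ (↑Γ1 : Set ℕ)) he
    omega
  have hadj' : ∀ t, t + 1 < d → f (t + 1) = f t + 1 ∨ f t = f (t + 1) + 1 := by
    intro t ht
    have h1 : α.1 + t ∈ Γ1 := hsub (by simp [Finset.mem_Ico]; omega)
    have h2 : α.1 + t + 1 ∈ Γ1 := hsub (by simp [Finset.mem_Ico]; omega)
    have := (hadj _ h1 _ h2).mpr (Or.inl rfl)
    rcases this with h' | h'
    · left; exact h'.symm
    · right; exact h'.symm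
  refine ⟨hcard, ?_⟩
  by_cases hd1 : d = 1
  · left
    intro t ht
    show f t = β.1 + t
    have ht0 : t = 0 := by omega
    subst ht0
    have := hmem 0 (by omega)
    omega
  · have h2d : 2 ≤ d := by omega
    rcases hadj' 0 (by omega) with hup | hdn
    · left
      have hup' : f 1 = f 0 + 1 := hup
      have key : ∀ t, t < d → f t = f 0 + t := by
        intro t
        induction t using Nat.strong_induction_on with
        | _ t ih =>
          intro ht
          match t with
          | 0 => simp
          | 1 => omega
          | (s+2) =>
            have h1 : f (s+1) = f 0 + (s+1) := ih (s+1) (by omega) (by omega)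
            have h0 : f s = f 0 + s := ih s (by omega) (by omega)
            have hnorm : f (s+1+1) = f (s+2) := rfl
            rcases hadj' (s+1) (by omega) with h' | h'
            · omega
            · have he : f (s+2) = f s := by omega
              have := hinj' (s+2) s (by omega) (by omega) he
              omega
      intro t ht
      show f t = β.1 + t
      have k1 := key t ht
      have k2 := key (d-1) (by omega)
      have m1 := hmem 0 (by omega)
      have m2 := hmem (d-1) (by omega)
      omega
    · right
      have hdn' : f 0 = f 1 + 1 := hdn
      have key : ∀ t, t < d → f t + t = f 0 := by
        intro t
        induction t using Nat.strong_induction_on with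
        | _ t ih =>
          intro ht
          match t with
          | 0 => simp
          | 1 => omega
          | (s+2) =>
            have h1 : f (s+1) + (s+1) = f 0 := ih (s+1) (by omega) (by omega)
            have h0 : f s + s = f 0 := ih s (by omega) (by omega)
            have hnorm : f (s+1+1) = f (s+2) := rfl
            rcases hadj' (s+1) (by omega) with h' | h'
            · have he : f (s+2) = f s := by omega
              have := hinj' (s+2) s (by omega) (by omega) he
              omega
            · omega
      intro t ht
      show f t + t + 1 = β.2
      have k1 := key t ht
      have k2 := key (d-1) (by omega)
      have m1 := hmem 0 (by omega)
      have m2 := hmem (d-1) (by omega)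
      omega

end Lemmas2
section Lemmas3

variable {n : ℕ} {Γ1 Γ2 : Finset ℕ} {T : ℕ → ℕ}

lemma sub_TStep_fwd {α β : ℕ × ℕ} (hs : TStep T Γ1 α β)
    (haff : ∀ t, t < α.2 - α.1 → T (α.1 + t) = β.1 + t)
    {s t : ℕ} (h1 : α.1 ≤ s) (h2 : s < t) (h3 : t ≤ α.2) :
    TStep T Γ1 (s, t) (β.1 + (s - α.1), β.1 + (t - α.1)) := by
  obtain ⟨hA, hB, hsub, himg⟩ := hs
  refine ⟨h2, by simp; omega, fun u hu => hsub (by simp [Finset.mem_Ico] at hu ⊢; omega), ?_⟩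
  ext u
  simp only [Finset.mem_image, Finset.mem_Ico]
  constructor
  · rintro ⟨v, ⟨hv1, hv2⟩, rfl⟩
    have e := haff (v - α.1) (by omega)
    rw [show α.1 + (v - α.1) = v by omega] at e
    omega
  · rintro ⟨hu1, hu2⟩
    refine ⟨α.1 + (u - β.1), by omega, ?_⟩
    rw [haff (u - β.1) (by omega)]
    omega

lemma sub_TStep_rev {α β : ℕ × ℕ} (hs : TStep T Γ1 α β)
    (hcard : β.2 - β.1 = α.2 - α.1)
    (haff : ∀ t, t < α.2 - α.1 → T (α.1 + t) + t + 1 = β.2)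
    {s t : ℕ} (h1 : α.1 ≤ s) (h2 : s < t) (h3 : t ≤ α.2) :
    TStep T Γ1 (s, t) (β.2 - (t - α.1), β.2 - (s - α.1)) := by
  obtain ⟨hA, hB, hsub, himg⟩ := hs
  refine ⟨h2, by simp; omega, fun u hu => hsub (by simp [Finset.mem_Ico] at hu ⊢; omega), ?_⟩
  ext u
  simp only [Finset.mem_image, Finset.mem_Ico]
  constructor
  · rintro ⟨v, ⟨hv1, hv2⟩, rfl⟩
    have e := haff (v - α.1) (by omega)
    rw [show α.1 + (v - α.1) = v by omega] at e
    omega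
  · rintro ⟨hu1, hu2⟩
    refine ⟨α.1 + (β.2 - 1 - u), by omega, ?_⟩
    have e := haff (β.2 - 1 - u) (by omega)
    omega

lemma master (h : BDTriple n Γ1 Γ2 T) :
    ∀ (k : ℕ) (α β : ℕ × ℕ), TIter T Γ1 k α β → α.1 < α.2 →
      β.1 < β.2 ∧ β.2 - β.1 = α.2 - α.1 ∧
      ((∀ s t, α.1 ≤ s → s < t → t ≤ α.2 →
          TIter T Γ1 k (s, t) (β.1 + (s - α.1), β.1 + (t - α.1))) ∨
       (∀ s t, α.1 ≤ s → s < t → t ≤ α.2 →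
          TIter T Γ1 k (s, t) (β.2 - (t - α.1), β.2 - (s - α.1)))) := by
  intro k
  induction k with
  | zero =>
    intro α β h0 hα
    obtain rfl : α = β := h0
    refine ⟨hα, rfl, Or.inl ?_⟩
    intro s t h1 h2 h3
    show (s, t) = (α.1 + (s - α.1), α.1 + (t - α.1))
    rw [Prod.mk.injEq]
    omega
  | succ k ih =>
    rintro α β ⟨γ, hstep, hiter⟩ hα
    have hγ : γ.1 < γ.2 := hstep.2.1
    obtain ⟨hc1, haff1⟩ := step_affine h hstep
    obtain ⟨hβlt, hc2, haff2⟩ := ih γ β hiter hγ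
    refine ⟨hβlt, by omega, ?_⟩
    rcases haff1 with f1 | r1 <;> rcases haff2 with f2 | r2
    · left
      intro s t h1 h2 h3
      refine ⟨(γ.1 + (s - α.1), γ.1 + (t - α.1)), sub_TStep_fwd hstep f1 h1 h2 h3, ?_⟩
      have := f2 (γ.1 + (s - α.1)) (γ.1 + (t - α.1)) (by omega) (by omega) (by omega)
      have e : ((β.1 + (γ.1 + (s - α.1) - γ.1), β.1 + (γ.1 + (t - α.1) - γ.1)) : ℕ × ℕ)
          = (β.1 + (s - α.1), β.1 + (t - α.1)) := by rw [Prod.mk.injEq]; omega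
      rwa [e] at this
    · right
      intro s t h1 h2 h3
      refine ⟨(γ.1 + (s - α.1), γ.1 + (t - α.1)), sub_TStep_fwd hstep f1 h1 h2 h3, ?_⟩
      have := r2 (γ.1 + (s - α.1)) (γ.1 + (t - α.1)) (by omega) (by omega) (by omega)
      have e : ((β.2 - (γ.1 + (t - α.1) - γ.1), β.2 - (γ.1 + (s - α.1) - γ.1)) : ℕ × ℕ)
          = (β.2 - (t - α.1), β.2 - (s - α.1)) := by rw [Prod.mk.injEq]; omega
      rwa [e] at this
    · right
      intro s t h1 h2 h3
      refine ⟨(γ.2 - (t - α.1), γ.2 - (s - α.1)), sub_TStep_rev hstep hc1 r1 h1 h2 h3, ?_⟩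
      have := f2 (γ.2 - (t - α.1)) (γ.2 - (s - α.1)) (by omega) (by omega) (by omega)
      have e : ((β.1 + (γ.2 - (t - α.1) - γ.1), β.1 + (γ.2 - (s - α.1) - γ.1)) : ℕ × ℕ)
          = (β.2 - (t - α.1), β.2 - (s - α.1)) := by rw [Prod.mk.injEq]; omega
      rwa [e] at this
    · left
      intro s t h1 h2 h3
      refine ⟨(γ.2 - (t - α.1), γ.2 - (s - α.1)), sub_TStep_rev hstep hc1 r1 h1 h2 h3, ?_⟩
      have := r2 (γ.2 - (t - α.1)) (γ.2 - (s - α.1)) (by omega) (by omega) (by omega)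
      have e : ((β.2 - (γ.2 - (s - α.1) - γ.1), β.2 - (γ.2 - (t - α.1) - γ.1)) : ℕ × ℕ)
          = (β.1 + (s - α.1), β.1 + (t - α.1)) := by rw [Prod.mk.injEq]; omega
      rwa [e] at this

end Lemmas3
section MatrixLemmas

open Matrix Kronecker

lemma kron_std {N : ℕ} (i j k l : Fin (N + 1)) :
    (single i j (1 : ℂ)) ⊗ₖ (single k l (1 : ℂ)) =
      single ((i, k) : Fin (N+1) × Fin (N+1)) (j, l) 1 := by
  ext ⟨a, b⟩ ⟨c, d⟩
  simp only [kroneckerMap_apply, single, of_apply, Prod.mk.injEq]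
  by_cases h1 : i = a <;> by_cases h2 : j = c <;> by_cases h3 : k = b <;> by_cases h4 : l = d <;>
    simp [h1, h2, h3, h4]

lemma std_eq_iff {I J : Type*} [DecidableEq I] [DecidableEq J] (p p' : I) (q q' : J) :
    single p q (1 : ℂ) = single p' q' 1 ↔ p = p' ∧ q = q' := by
  constructor
  · intro h
    have h2 := congrFun (congrFun h p) q
    simp only [single, of_apply] at h2
    by_cases hc : p' = p ∧ q' = q
    · exact ⟨hc.1.symm, hc.2.symm⟩
    · simp [hc] at h2
  · rintro ⟨rfl, rfl⟩; rfl

lemma std_ne_zero {I J : Type*} [DecidableEq I] [DecidableEq J] (p : I) (q : J) :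
    single p q (1 : ℂ) ≠ 0 := by
  intro h
  have h2 := congrFun (congrFun h p) q
  simp [single] at h2

open Fin.NatCast in
lemma fin_cast_inj {N u v : ℕ} (hu : u ≤ N) (hv : v ≤ N) (h : (u : Fin (N + 1)) = v) : u = v := by
  have h2 := congrArg Fin.val h
  rw [Fin.val_natCast, Fin.val_natCast, Nat.mod_eq_of_lt (by omega), Nat.mod_eq_of_lt (by omega)] at h2
  exact h2

end MatrixLemmas
section Lemmas5

variable {n : ℕ} {Γ1 Γ2 : Finset ℕ} {T : ℕ → ℕ}

lemma key_rev (h : BDTriple n Γ1 Γ2 T) {k : ℕ} {α β : ℕ × ℕ}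
    (hiter : TIter T Γ1 k α β) (hα : α.1 < α.2)
    (hrev : TIter T Γ1 k (α.1, α.1 + 1) (β.2 - 1, β.2)) :
    β.1 < β.2 ∧ β.2 - β.1 = α.2 - α.1 ∧
      ∀ s t, α.1 ≤ s → s < t → t ≤ α.2 →
        TIter T Γ1 k (s, t) (β.2 - (t - α.1), β.2 - (s - α.1)) := by
  obtain ⟨hβ, hc, hdisj⟩ := master h k α β hiter hα
  refine ⟨hβ, hc, ?_⟩
  rcases hdisj with f | r
  · have h1 := f α.1 (α.1 + 1) le_rfl (by omega) (by omega)
    have e := TIter_func h1 hrev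
    rw [Prod.mk.injEq] at e
    intro s t h1' h2' h3'
    have h2 := f s t h1' h2' h3'
    have e2 : ((β.1 + (s - α.1), β.1 + (t - α.1)) : ℕ × ℕ)
        = (β.2 - (t - α.1), β.2 - (s - α.1)) := by rw [Prod.mk.injEq]; omega
    rwa [e2] at h2
  · exact r

lemma TPair.bounds (x : TPair n T Γ1) :
    1 ≤ x.α.1 ∧ x.α.1 < x.α.2 ∧ x.α.2 ≤ n ∧ 1 ≤ x.β.1 ∧ x.β.1 < x.β.2 ∧ x.β.2 ≤ n :=
  ⟨x.hlo.1, x.hα, x.hhi.1, x.hlo.2, TIter_lt x.hiter x.hα, x.hhi.2⟩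

open Matrix Kronecker

open Fin.NatCast in
lemma Epair_mul_iff (x y w : TPair n T Γ1) (hx : x.pos = w.pos) (hy : y.pos = w.pos) :
    Epair x * Epair y = Epair w ↔
      (x.β.1 = w.β.1 ∧ x.α.2 = w.α.2 ∧ y.β.2 = w.β.2 ∧ y.α.1 = w.α.1 ∧
        x.α.1 = y.α.2 ∧ x.β.2 = y.β.1) := by
  obtain ⟨bx1, bx2, bx3, bx4, bx5, bx6⟩ := x.bounds
  obtain ⟨by1, by2, by3, by4, by5, by6⟩ := y.bounds
  obtain ⟨bw1, bw2, bw3, bw4, bw5, bw6⟩ := w.bounds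
  have cast_inj : ∀ u v : ℕ, u ≤ n → v ≤ n → ((u : Fin (n+1)) = v ↔ u = v) := by
    intro u v hu hv
    exact ⟨fun he => fin_cast_inj hu hv he, fun he => by rw [he]⟩
  cases hwp : w.pos
  · have ex : Epair x = single (x.α.2 : Fin (n+1)) (x.α.1 : Fin (n+1)) (1:ℂ) ⊗ₖ
        single (x.β.1 : Fin (n+1)) (x.β.2 : Fin (n+1)) (1:ℂ) := by
      simp [Epair, Eroot, hx, hwp]
    have ey : Epair y = single (y.α.2 : Fin (n+1)) (y.α.1 : Fin (n+1)) (1:ℂ) ⊗ₖ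
        single (y.β.1 : Fin (n+1)) (y.β.2 : Fin (n+1)) (1:ℂ) := by
      simp [Epair, Eroot, hy, hwp]
    have ew : Epair w = single (w.α.2 : Fin (n+1)) (w.α.1 : Fin (n+1)) (1:ℂ) ⊗ₖ
        single (w.β.1 : Fin (n+1)) (w.β.2 : Fin (n+1)) (1:ℂ) := by
      simp [Epair, Eroot, hwp]
    rw [ex, ey, ew, ← Matrix.mul_kronecker_mul]
    by_cases hm2 : (x.α.1 : Fin (n+1)) = (y.α.2 : Fin (n+1))
    · by_cases hm1 : (x.β.2 : Fin (n+1)) = (y.β.1 : Fin (n+1))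
      · rw [hm1, hm2, Matrix.single_mul_single_same, Matrix.single_mul_single_same, one_mul,
          kron_std, kron_std, std_eq_iff]
        rw [Prod.mk.injEq, Prod.mk.injEq]
        rw [cast_inj _ _ (by omega) (by omega), cast_inj _ _ (by omega) (by omega),
          cast_inj _ _ (by omega) (by omega), cast_inj _ _ (by omega) (by omega)]
        rw [cast_inj _ _ (by omega) (by omega)] at hm1 hm2
        constructor
        · rintro ⟨⟨e1, e2⟩, e3, e4⟩; exact ⟨e2, e1, e4, e3, hm2, hm1⟩
        · rintro ⟨e1, e2, e3, e4, -, -⟩; exact ⟨⟨e2, e1⟩, e4, e3⟩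
      · rw [Matrix.single_mul_single_of_ne (h := hm1), Matrix.kronecker_zero, kron_std]
        constructor
        · intro h0; exact absurd h0.symm (std_ne_zero _ _)
        · rintro ⟨-, -, -, -, -, e6⟩
          exact absurd (by rw [e6]) hm1
    · rw [Matrix.single_mul_single_of_ne (h := hm2), Matrix.zero_kronecker, kron_std]
      constructor
      · intro h0; exact absurd h0.symm (std_ne_zero _ _)
      · rintro ⟨-, -, -, -, e5, -⟩
        exact absurd (by rw [e5]) hm2
  · have ex : Epair x = single (x.β.1 : Fin (n+1)) (x.β.2 : Fin (n+1)) (1:ℂ) ⊗ₖ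
        single (x.α.2 : Fin (n+1)) (x.α.1 : Fin (n+1)) (1:ℂ) := by
      simp [Epair, Eroot, hx, hwp]
    have ey : Epair y = single (y.β.1 : Fin (n+1)) (y.β.2 : Fin (n+1)) (1:ℂ) ⊗ₖ
        single (y.α.2 : Fin (n+1)) (y.α.1 : Fin (n+1)) (1:ℂ) := by
      simp [Epair, Eroot, hy, hwp]
    have ew : Epair w = single (w.β.1 : Fin (n+1)) (w.β.2 : Fin (n+1)) (1:ℂ) ⊗ₖ
        single (w.α.2 : Fin (n+1)) (w.α.1 : Fin (n+1)) (1:ℂ) := by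
      simp [Epair, Eroot, hwp]
    rw [ex, ey, ew, ← Matrix.mul_kronecker_mul]
    by_cases hm2 : (x.α.1 : Fin (n+1)) = (y.α.2 : Fin (n+1))
    · by_cases hm1 : (x.β.2 : Fin (n+1)) = (y.β.1 : Fin (n+1))
      · rw [hm1, hm2, Matrix.single_mul_single_same, Matrix.single_mul_single_same, one_mul,
          kron_std, kron_std, std_eq_iff]
        rw [Prod.mk.injEq, Prod.mk.injEq]
        rw [cast_inj _ _ (by omega) (by omega), cast_inj _ _ (by omega) (by omega),
          cast_inj _ _ (by omega) (by omega), cast_inj _ _ (by omega) (by omega)]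
        rw [cast_inj _ _ (by omega) (by omega)] at hm1 hm2
        constructor
        · rintro ⟨⟨e1, e2⟩, e3, e4⟩; exact ⟨e1, e2, e3, e4, hm2, hm1⟩
        · rintro ⟨e1, e2, e3, e4, -, -⟩; exact ⟨⟨e1, e2⟩, e3, e4⟩
      · rw [Matrix.single_mul_single_of_ne (h := hm1), Matrix.zero_kronecker, kron_std]
        constructor
        · intro h0; exact absurd h0.symm (std_ne_zero _ _)
        · rintro ⟨-, -, -, -, -, e6⟩
          exact absurd (by rw [e6]) hm1
    · rw [Matrix.single_mul_single_of_ne (h := hm2), Matrix.kronecker_zero, kron_std]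
      constructor
      · intro h0; exact absurd h0.symm (std_ne_zero _ _)
      · rintro ⟨-, -, -, -, e5, -⟩
        exact absurd (by rw [e5]) hm2

end Lemmas5

lemma TPair.ext' {n : ℕ} {T : ℕ → ℕ} {Γ1 : Finset ℕ} {x y : TPair n T Γ1}
    (h1 : x.pos = y.pos) (h2 : x.k = y.k) (h3 : x.α = y.α) (h4 : x.β = y.β) : x = y := by
  cases x; cases y
  dsimp at h1 h2 h3 h4
  subst h1; subst h2; subst h3; subst h4
  rfl


/-- If an orientation-reversing `T`-pair `z` has size `d = |z|` and order `k`, then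
there are exactly `d - 1` ways of writing `E_z = E_x E_y` with `x, y` `T`-pairs of the
same sign as `z` and `Ord(x) = Ord(y) = k`; moreover in every such factorization both
`x` and `y` reverse orientation (`C_x = C_y = 1`). -/
theorem reversed_factorization_count (n : ℕ) (Γ1 Γ2 : Finset ℕ) (T : ℕ → ℕ)
    (h : BDTriple n Γ1 Γ2 T) (z : TPair n T Γ1) (hz : ROrient z) :
    let S : Set (TPair n T Γ1 × TPair n T Γ1) :=
      {p | p.1.pos = z.pos ∧ p.2.pos = z.pos ∧ p.1.k = z.k ∧ p.2.k = z.k ∧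
        Epair p.1 * Epair p.2 = Epair z}
    S.ncard = (z.α.2 - z.α.1) - 1 ∧ ∀ p ∈ S, ROrient p.1 ∧ ROrient p.2 := by
  intro S
  have hSdef : ∀ p : TPair n T Γ1 × TPair n T Γ1, p ∈ S ↔
      (p.1.pos = z.pos ∧ p.2.pos = z.pos ∧ p.1.k = z.k ∧ p.2.k = z.k ∧
        Epair p.1 * Epair p.2 = Epair z) := fun p => Iff.rfl
  obtain ⟨hβlt, hcard, hsub⟩ := key_rev h z.hiter z.hα hz
  have hb1 : 1 ≤ z.β.1 := z.hlo.2
  have hb2 : z.β.2 ≤ n := z.hhi.2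
  have ha1 : 1 ≤ z.α.1 := z.hlo.1
  have ha2 : z.α.2 ≤ n := z.hhi.1
  have haa : z.α.1 < z.α.2 := z.hα
  -- membership characterization
  have hmem : ∀ x y : TPair n T Γ1, (x, y) ∈ S ↔
      (x.pos = z.pos ∧ y.pos = z.pos ∧ x.k = z.k ∧ y.k = z.k ∧
        z.α.1 < x.α.1 ∧ x.α.1 < z.α.2 ∧
        x.α = (x.α.1, z.α.2) ∧ y.α = (z.α.1, x.α.1) ∧
        x.β = (z.β.1, z.β.2 - (x.α.1 - z.α.1)) ∧
        y.β = (z.β.2 - (x.α.1 - z.α.1), z.β.2)) := by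
    intro x y
    rw [hSdef]
    dsimp only
    constructor
    · rintro ⟨hx, hy, hkx, hky, hmul⟩
      rw [Epair_mul_iff x y z hx hy] at hmul
      obtain ⟨e1, e2, e3, e4, e5, e6⟩ := hmul
      have hy2 : y.α.1 < y.α.2 := y.hα
      have hx2 : x.α.1 < x.α.2 := x.hα
      have hm1 : z.α.1 < x.α.1 := by omega
      have hm2 : x.α.1 < z.α.2 := by omega
      have hxα : x.α = (x.α.1, z.α.2) := by
        rw [← e2]
      have hyα : y.α = (z.α.1, x.α.1) := by
        rw [← e4, e5]
      have hX := hsub x.α.1 z.α.2 (le_of_lt hm1) hm2 le_rfl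
      have eX : ((z.β.2 - (z.α.2 - z.α.1), z.β.2 - (x.α.1 - z.α.1)) : ℕ × ℕ)
          = (z.β.1, z.β.2 - (x.α.1 - z.α.1)) := by rw [Prod.mk.injEq]; omega
      rw [eX] at hX
      have hY := hsub z.α.1 x.α.1 le_rfl hm1 (le_of_lt hm2)
      have eY : ((z.β.2 - (x.α.1 - z.α.1), z.β.2 - (z.α.1 - z.α.1)) : ℕ × ℕ)
          = (z.β.2 - (x.α.1 - z.α.1), z.β.2) := by rw [Prod.mk.injEq]; omega
      rw [eY] at hY
      have hxi := x.hiter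
      rw [hkx, hxα] at hxi
      have hyi := y.hiter
      rw [hky, hyα] at hyi
      exact ⟨hx, hy, hkx, hky, hm1, hm2, hxα, hyα, TIter_func hxi hX, TIter_func hyi hY⟩
    · rintro ⟨hx, hy, hkx, hky, hm1, hm2, hxα, hyα, hxβ, hyβ⟩
      refine ⟨hx, hy, hkx, hky, ?_⟩
      rw [Epair_mul_iff x y z hx hy]
      refine ⟨?_, ?_, ?_, ?_, ?_, ?_⟩
      · rw [hxβ]
      · rw [hxα]
      · rw [hyβ]
      · rw [hyα]
      · rw [hyα]
      · rw [hxβ, hyβ]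
  -- the projection map
  have hbij : Set.BijOn (fun p : TPair n T Γ1 × TPair n T Γ1 => p.1.α.1) S
      (Set.Ioo z.α.1 z.α.2) := by
    refine ⟨?_, ?_, ?_⟩
    · rintro ⟨x, y⟩ hp
      obtain ⟨-, -, -, -, hm1, hm2, -⟩ := (hmem x y).mp hp
      exact Set.mem_Ioo.mpr ⟨hm1, hm2⟩
    · rintro ⟨x, y⟩ hp ⟨x', y'⟩ hp' he
      obtain ⟨hx, hy, hkx, hky, hm1, hm2, hxα, hyα, hxβ, hyβ⟩ := (hmem x y).mp hp
      obtain ⟨hx', hy', hkx', hky', hm1', hm2', hxα', hyα', hxβ', hyβ'⟩ := (hmem x' y').mp hp'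
      dsimp at he
      have e1 : x = x' := TPair.ext' (hx.trans hx'.symm) (hkx.trans hkx'.symm)
        (by rw [hxα, hxα', he]) (by rw [hxβ, hxβ', he])
      have e2 : y = y' := TPair.ext' (hy.trans hy'.symm) (hky.trans hky'.symm)
        (by rw [hyα, hyα', he]) (by rw [hyβ, hyβ', he])
      rw [Prod.mk.injEq]
      exact ⟨e1, e2⟩
    · rintro m hm
      rw [Set.mem_Ioo] at hm
      obtain ⟨hm1, hm2⟩ := hm
      have hXit : TIter T Γ1 z.k (m, z.α.2) (z.β.1, z.β.2 - (m - z.α.1)) := by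
        have h2 := hsub m z.α.2 (le_of_lt hm1) hm2 le_rfl
        have e : ((z.β.2 - (z.α.2 - z.α.1), z.β.2 - (m - z.α.1)) : ℕ × ℕ)
            = (z.β.1, z.β.2 - (m - z.α.1)) := by rw [Prod.mk.injEq]; omega
        rwa [e] at h2
      have hYit : TIter T Γ1 z.k (z.α.1, m) (z.β.2 - (m - z.α.1), z.β.2) := by
        have h2 := hsub z.α.1 m le_rfl hm1 (le_of_lt hm2)
        have e : ((z.β.2 - (m - z.α.1), z.β.2 - (z.α.1 - z.α.1)) : ℕ × ℕ)
            = (z.β.2 - (m - z.α.1), z.β.2) := by rw [Prod.mk.injEq]; omega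
        rwa [e] at h2
      refine ⟨(⟨z.pos, z.k, (m, z.α.2), (z.β.1, z.β.2 - (m - z.α.1)),
          hm2, ⟨by omega, by omega⟩, ⟨by omega, by omega⟩, hXit, fun hp => z.hpos hp⟩,
        ⟨z.pos, z.k, (z.α.1, m), (z.β.2 - (m - z.α.1), z.β.2),
          hm1, ⟨by omega, by omega⟩, ⟨by omega, by omega⟩, hYit, fun hp => z.hpos hp⟩), ?_, rfl⟩
      exact (hmem _ _).mpr ⟨rfl, rfl, rfl, rfl, hm1, hm2, rfl, rfl, rfl, rfl⟩
  constructor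
  · have h1 : ((fun p : TPair n T Γ1 × TPair n T Γ1 => p.1.α.1) '' S).ncard = S.ncard :=
      Set.ncard_image_of_injOn hbij.injOn
    rw [hbij.image_eq] at h1
    rw [← h1, ← Finset.coe_Ioo, Set.ncard_coe_finset, Nat.card_Ioo]
  · rintro ⟨x, y⟩ hp
    obtain ⟨hx, hy, hkx, hky, hm1, hm2, hxα, hyα, hxβ, hyβ⟩ := (hmem x y).mp hp
    constructor
    · show TIter T Γ1 x.k (x.α.1, x.α.1 + 1) (x.β.2 - 1, x.β.2)
      have hb : x.β.2 = z.β.2 - (x.α.1 - z.α.1) := by rw [hxβ]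
      rw [hkx, hb]
      have h2 := hsub x.α.1 (x.α.1 + 1) (le_of_lt hm1) (by omega) (by omega)
      have e : ((z.β.2 - (x.α.1 + 1 - z.α.1), z.β.2 - (x.α.1 - z.α.1)) : ℕ × ℕ)
          = (z.β.2 - (x.α.1 - z.α.1) - 1, z.β.2 - (x.α.1 - z.α.1)) := by
        rw [Prod.mk.injEq]; omega
      rwa [e] at h2
    · show TIter T Γ1 y.k (y.α.1, y.α.1 + 1) (y.β.2 - 1, y.β.2)
      have ha : y.α.1 = z.α.1 := by rw [hyα]
      have hb : y.β.2 = z.β.2 := by rw [hyβ]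
      rw [hky, ha, hb]
      exact hz
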